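/- For α > 0, the median ν(α) of the Gamma(α, 1) distribution satisfies α − 1/3 < ν(α) < α. -/

import Mathlib

open MeasureTheory Set Real


/-- If `f 0 = 0` and `f` has positive derivative on `Ioi 0`, then `f > 0` on `Ioi 0`. -/
lemma pos_on_Ioi {f f' : ℝ → ℝ} (hd : ∀ x, HasDerivAt f (f' x) x) (h0 : f 0 = 0)
    (hp : ∀ x, 0 < x → 0 < f' x) : ∀ x, 0 < x → 0 < f x := by
  intro x hx
  have hmono : StrictMonoOn f (Ici 0) := by
    apply strictMonoOn_of_deriv_pos (convex_Ici 0)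
    · exact fun y _ => ((hd y).differentiableAt).continuousAt.continuousWithinAt
    · intro y hy
      rw [interior_Ici] at hy
      rw [(hd y).deriv]
      exact hp y hy
  have := hmono (self_mem_Ici) (le_of_lt hx : (0:ℝ) ≤ x) hx
  rwa [h0] at this

/-- `t * e^t - e^t + 1 > 0` for `t > 0`. -/
lemma K1_pos : ∀ t : ℝ, 0 < t → 0 < t * Real.exp t - Real.exp t + 1 := by
  apply pos_on_Ioi (f' := fun t => t * Real.exp t)
  · intro x
    have h1 : HasDerivAt (fun t : ℝ => t * Real.exp t) (x * Real.exp x + Real.exp x) x := by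
      simpa [add_comm] using ((hasDerivAt_id x).fun_mul (Real.hasDerivAt_exp x))
    have h2 : HasDerivAt (fun t : ℝ => t * Real.exp t - Real.exp t + 1)
        ((x * Real.exp x + Real.exp x) - Real.exp x + 0) x :=
      ((h1.sub (Real.hasDerivAt_exp x)).add (hasDerivAt_const x 1))
    simpa using h2
  · simp
  · intro x hx
    positivity

/-- `t * e^t - 2 e^t + t + 2 > 0` for `t > 0` (upper-bound key inequality). -/
lemma K_pos : ∀ t : ℝ, 0 < t → 0 < t * Real.exp t - 2 * Real.exp t + t + 2 := by
  apply pos_on_Ioi (f' := fun t => t * Real.exp t - Real.exp t + 1)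
  · intro x
    have h1 : HasDerivAt (fun t : ℝ => t * Real.exp t) (x * Real.exp x + Real.exp x) x := by
      simpa [add_comm] using ((hasDerivAt_id x).fun_mul (Real.hasDerivAt_exp x))
    have h2 : HasDerivAt (fun t : ℝ => t * Real.exp t - 2 * Real.exp t + t + 2)
        ((x * Real.exp x + Real.exp x) - 2 * Real.exp x + 1 + 0) x :=
      (((h1.sub ((Real.hasDerivAt_exp x).const_mul 2)).add (hasDerivAt_id x)).add
        (hasDerivAt_const x 2))
    convert h2 using 1
    ring
  · simp
  · exact K1_pos
/-- Template: `a4 e^{4s} + a3 e^{3s} + a1 e^s + c + s (b1 e^s + b3 e^{3s})`. -/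
noncomputable def T (a4 a3 a1 c b1 b3 : ℝ) (s : ℝ) : ℝ :=
  a4 * Real.exp (4*s) + a3 * Real.exp (3*s) + a1 * Real.exp s + c
    + s * (b1 * Real.exp s + b3 * Real.exp (3*s))

lemma T_hasDerivAt (a4 a3 a1 c b1 b3 x : ℝ) :
    HasDerivAt (T a4 a3 a1 c b1 b3) (T (4*a4) (3*a3+b3) (a1+b1) 0 b1 (3*b3) x) x := by
  have hE1 : HasDerivAt Real.exp (Real.exp x) x := Real.hasDerivAt_exp x
  have hE3 : HasDerivAt (fun s : ℝ => Real.exp (3*s)) (3 * Real.exp (3*x)) x := by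
    simpa [Function.comp_def, mul_comm] using ((Real.hasDerivAt_exp (3*x)).comp x ((hasDerivAt_id x).const_mul 3))
  have hE4 : HasDerivAt (fun s : ℝ => Real.exp (4*s)) (4 * Real.exp (4*x)) x := by
    simpa [Function.comp_def, mul_comm] using ((Real.hasDerivAt_exp (4*x)).comp x ((hasDerivAt_id x).const_mul 4))
  have h : HasDerivAt (T a4 a3 a1 c b1 b3)
      (a4 * (4 * Real.exp (4*x)) + a3 * (3 * Real.exp (3*x)) + a1 * Real.exp x + 0
        + (1 * (b1 * Real.exp x + b3 * Real.exp (3*x))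
          + x * (b1 * Real.exp x + b3 * (3 * Real.exp (3*x))))) x := by
    exact ((((hE4.const_mul a4).add (hE3.const_mul a3)).add (hE1.const_mul a1)).add
      (hasDerivAt_const x c)).add
      ((hasDerivAt_id x).mul ((hE1.const_mul b1).add (hE3.const_mul b3)))
  convert h using 1
  simp only [T]
  ring

lemma T_chain {a4 a3 a1 c b1 b3 : ℝ} (h0 : a4 + a3 + a1 + c = 0)
    (hnext : ∀ x, 0 < x → 0 < T (4*a4) (3*a3+b3) (a1+b1) 0 b1 (3*b3) x) :
    ∀ x, 0 < x → 0 < T a4 a3 a1 c b1 b3 x := by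
  apply pos_on_Ioi (fun x => T_hasDerivAt a4 a3 a1 c b1 b3 x) _ hnext
  simp only [T]
  norm_num
  linarith [h0]

lemma P5_pos : ∀ x : ℝ, 0 < x → 0 < T 1024 (-972) (-16) 0 (-3) (-729) x := by
  intro x hx
  have hE1 : Real.exp x ≥ 1 + x := by linarith [Real.add_one_le_exp x]
  have hE1pos : 0 < Real.exp x := Real.exp_pos x
  have hE3pos : 0 < Real.exp (3*x) := Real.exp_pos _
  have hE3ge : Real.exp x ≤ Real.exp (3*x) := Real.exp_le_exp.2 (by linarith)
  have hE4 : Real.exp (4*x) = Real.exp (3*x) * Real.exp x := by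
    rw [← Real.exp_add]; ring_nf
  simp only [T, hE4]
  nlinarith [mul_pos hE3pos hx, mul_le_mul_of_nonneg_left hE1 (le_of_lt hE3pos),
    mul_le_mul_of_nonneg_right hE3ge (le_of_lt hx), mul_pos (mul_pos hE3pos hx) hx]

lemma P_pos : ∀ x : ℝ, 0 < x → 0 < T 1 1 (-1) (-1) (-3) (-3) x := by
  have h5 := P5_pos
  have h4 : ∀ x, 0 < x → 0 < T 256 (-243) (-13) 0 (-3) (-243) x := by
    apply T_chain (by norm_num)
    convert h5 using 4 <;> norm_num
  have h3 : ∀ x, 0 < x → 0 < T 64 (-54) (-10) 0 (-3) (-81) x := by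
    apply T_chain (by norm_num)
    convert h4 using 4 <;> norm_num
  have h2 : ∀ x, 0 < x → 0 < T 16 (-9) (-7) 0 (-3) (-27) x := by
    apply T_chain (by norm_num)
    convert h3 using 4 <;> norm_num
  have h1 : ∀ x, 0 < x → 0 < T 4 0 (-4) 0 (-3) (-9) x := by
    apply T_chain (by norm_num)
    convert h2 using 4 <;> norm_num
  apply T_chain (by norm_num)
  convert h1 using 4 <;> norm_num

/-- Lower-bound key inequality: `t e^t - e^t + 1 < e^{t/3} (e^t - 1 - t)` for `t > 0`. -/
lemma H_ineq {t : ℝ} (ht : 0 < t) :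
    t * Real.exp t - Real.exp t + 1 < Real.exp (t/3) * (Real.exp t - 1 - t) := by
  have hP := P_pos (t/3) (by linarith)
  have e3 : Real.exp (3*(t/3)) = Real.exp t := by rw [show 3*(t/3) = t by ring]
  have e4 : Real.exp (4*(t/3)) = Real.exp (t/3) * Real.exp t := by
    rw [← Real.exp_add]; ring_nf
  simp only [T, e3, e4] at hP
  nlinarith [hP]

lemma K1_pos' : ∀ t : ℝ, 0 < t → 0 < t * Real.exp t - Real.exp t + 1 := K1_pos

noncomputable def phiM (m t : ℝ) : ℝ := m*t/(Real.exp t - 1)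
noncomputable def phiP (m t : ℝ) : ℝ := m*t*Real.exp t/(Real.exp t - 1)
noncomputable def phiM' (m t : ℝ) : ℝ := m*(Real.exp t - 1 - t*Real.exp t)/(Real.exp t - 1)^2
noncomputable def phiP' (m t : ℝ) : ℝ := m*Real.exp t*(Real.exp t - 1 - t)/(Real.exp t - 1)^2

lemma expD_pos {t : ℝ} (ht : 0 < t) : 0 < Real.exp t - 1 := by
  have := Real.add_one_lt_exp (ne_of_gt ht); linarith

lemma hasDerivAt_phiM {m t : ℝ} (ht : 0 < t) : HasDerivAt (phiM m) (phiM' m t) t := by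
  have hD := expD_pos ht
  have h1 : HasDerivAt (fun s : ℝ => m * s) m t := by
    simpa using (hasDerivAt_id t).const_mul m
  have h2 : HasDerivAt (fun s : ℝ => Real.exp s - 1) (Real.exp t) t := by
    exact (Real.hasDerivAt_exp t).sub_const 1
  have h := h1.fun_div h2 (ne_of_gt hD)
  refine h.congr_deriv ?_
  unfold phiM'
  field_simp

lemma hasDerivAt_phiP {m t : ℝ} (ht : 0 < t) : HasDerivAt (phiP m) (phiP' m t) t := by
  have hD := expD_pos ht
  have h1 : HasDerivAt (fun s : ℝ => m * s * Real.exp s)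
      (m * Real.exp t + m * t * Real.exp t) t := by
    have := ((hasDerivAt_id t).const_mul m).fun_mul (Real.hasDerivAt_exp t)
    simp only [id] at this
    refine this.congr_deriv ?_
    ring
  have h2 : HasDerivAt (fun s : ℝ => Real.exp s - 1) (Real.exp t) t := by
    exact (Real.hasDerivAt_exp t).sub_const 1
  have h := h1.fun_div h2 (ne_of_gt hD)
  refine h.congr_deriv ?_
  unfold phiP'
  field_simp
  ring

lemma phiM'_neg {m t : ℝ} (hm : 0 < m) (ht : 0 < t) : phiM' m t < 0 := by
  have hD := expD_pos ht
  have hK := K1_pos' t ht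
  unfold phiM'
  apply div_neg_of_neg_of_pos _ (by positivity)
  nlinarith

lemma phiP'_pos {m t : ℝ} (hm : 0 < m) (ht : 0 < t) : 0 < phiP' m t := by
  have hD := expD_pos ht
  have h := Real.add_one_lt_exp (ne_of_gt ht)
  unfold phiP'
  have hE := Real.exp_pos t
  apply div_pos _ (by positivity)
  have h2 : 0 < Real.exp t - 1 - t := by linarith
  positivity

lemma phiM_anti {m : ℝ} (hm : 0 < m) : StrictAntiOn (phiM m) (Ioi 0) := by
  apply strictAntiOn_of_deriv_neg (convex_Ioi 0)
  · exact fun y hy => ((hasDerivAt_phiM hy).differentiableAt).continuousAt.continuousWithinAt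
  · intro y hy
    rw [interior_Ioi] at hy
    rw [(hasDerivAt_phiM hy).deriv]
    exact phiM'_neg hm hy

lemma phiP_mono {m : ℝ} (hm : 0 < m) : StrictMonoOn (phiP m) (Ioi 0) := by
  apply strictMonoOn_of_deriv_pos (convex_Ioi 0)
  · exact fun y hy => ((hasDerivAt_phiP hy).differentiableAt).continuousAt.continuousWithinAt
  · intro y hy
    rw [interior_Ioi] at hy
    rw [(hasDerivAt_phiP hy).deriv]
    exact phiP'_pos hm hy

lemma phiM_mem {m t : ℝ} (hm : 0 < m) (ht : 0 < t) : phiM m t ∈ Ioo 0 m := by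
  have hD := expD_pos ht
  have h := Real.add_one_lt_exp (ne_of_gt ht)
  constructor
  · unfold phiM; positivity
  · unfold phiM
    rw [div_lt_iff₀ hD]
    nlinarith

lemma phiP_mem {m t : ℝ} (hm : 0 < m) (ht : 0 < t) : phiP m t ∈ Ioi m := by
  have hD := expD_pos ht
  have hK := K1_pos' t ht
  unfold phiP
  rw [mem_Ioi, lt_div_iff₀ hD]
  nlinarith

lemma phiM_gt {m t : ℝ} (hm : 0 < m) (ht : 0 < t) : m * (1 - t) < phiM m t := by
  have hD := expD_pos ht
  have hK := K1_pos' t ht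
  have hE := Real.exp_pos t
  unfold phiM
  rw [lt_div_iff₀ hD]
  -- m(1-t)(E-1) < m t ⟸ (1-t)(E-1) < t ⟸ E - 1 < t E  (K1) and algebra
  nlinarith [Real.add_one_lt_exp (ne_of_gt ht), mul_pos ht hE]

lemma phiM_lt_4m {m t : ℝ} (hm : 0 < m) (ht : 0 < t) : phiM m t < 4*m/t := by
  have hD := expD_pos ht
  -- exp t ≥ (1+t/2)^2 so exp t - 1 ≥ t + t^2/4 > t^2/4
  have h1 : (1 + t/2) ≤ Real.exp (t/2) := by linarith [Real.add_one_le_exp (t/2)]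
  have h2 : Real.exp (t/2) * Real.exp (t/2) = Real.exp t := by
    rw [← Real.exp_add]; ring_nf
  have h3 : t^2/4 < Real.exp t - 1 := by nlinarith
  unfold phiM
  rw [div_lt_div_iff₀ hD ht]
  nlinarith

lemma phiP_lt {m t : ℝ} (hm : 0 < m) (ht : 0 < t) : phiP m t < m * Real.exp t := by
  have hD := expD_pos ht
  have h := Real.add_one_lt_exp (ne_of_gt ht)
  have hE := Real.exp_pos t
  unfold phiP
  rw [div_lt_iff₀ hD]
  have h2 : t < Real.exp t - 1 := by linarith
  calc m*t*Real.exp t = m*Real.exp t*t := by ring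
  _ < m*Real.exp t*(Real.exp t - 1) := by
      exact mul_lt_mul_of_pos_left h2 (by positivity)

lemma phiP_gt {m t : ℝ} (hm : 0 < m) (ht : 0 < t) : m * t < phiP m t := by
  have hD := expD_pos ht
  have hE := Real.exp_pos t
  unfold phiP
  rw [lt_div_iff₀ hD]
  nlinarith

lemma phiM_cont {m : ℝ} {s : Set ℝ} (hs : s ⊆ Ioi 0) : ContinuousOn (phiM m) s :=
  fun y hy => ((hasDerivAt_phiM (hs hy)).differentiableAt).continuousAt.continuousWithinAt

lemma phiP_cont {m : ℝ} {s : Set ℝ} (hs : s ⊆ Ioi 0) : ContinuousOn (phiP m) s :=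
  fun y hy => ((hasDerivAt_phiP (hs hy)).differentiableAt).continuousAt.continuousWithinAt

lemma image_phiM {m : ℝ} (hm : 0 < m) : phiM m '' (Ioi 0) = Ioo 0 m := by
  apply Subset.antisymm
  · rintro _ ⟨t, ht, rfl⟩
    exact phiM_mem hm ht
  · rintro x ⟨hx0, hxm⟩
    set t1 : ℝ := (1 - x/m)/2 with ht1def
    have ht1 : 0 < t1 := by
      have : x/m < 1 := (div_lt_one hm).2 hxm
      simp only [ht1def]; linarith
    have ht1' : t1 < 1 := by
      have : 0 < x/m := div_pos hx0 hm
      simp only [ht1def]; linarith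
    set t2 : ℝ := max 1 (8*m/x) with ht2def
    have ht2a : (1:ℝ) ≤ t2 := le_max_left _ _
    have ht2 : 8*m/x ≤ t2 := le_max_right _ _
    have ht12 : t1 ≤ t2 := by linarith
    have h1 : x < phiM m t1 := by
      have := phiM_gt hm ht1
      have : m * (1 - t1) = m - (m - x)/2 := by simp only [ht1def]; field_simp
      have h := phiM_gt hm ht1
      rw [this] at h
      linarith
    have h2 : phiM m t2 < x := by
      have ht2pos : 0 < t2 := by linarith
      have h := phiM_lt_4m hm ht2pos
      have h8 : 0 < 8*m/x := by positivity
      have : 4*m/t2 ≤ x/2 := by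
        rw [div_le_div_iff₀ ht2pos (by norm_num : (0:ℝ) < 2)]
        calc 4*m*2 = (8*m/x)*x := by field_simp; ring
        _ ≤ x * t2 := by
            rw [mul_comm x t2]
            exact mul_le_mul_of_nonneg_right ht2 (le_of_lt hx0)
      linarith
    have hsub : Icc t1 t2 ⊆ Ioi 0 := fun y hy => lt_of_lt_of_le ht1 hy.1
    have := intermediate_value_Icc' (f := phiM m) ht12 (phiM_cont hsub)
    have hx : x ∈ Icc (phiM m t2) (phiM m t1) := ⟨le_of_lt h2, le_of_lt h1⟩
    obtain ⟨t, ht, htx⟩ := this hx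
    exact ⟨t, hsub ht, htx⟩

lemma image_phiP {m : ℝ} (hm : 0 < m) : phiP m '' (Ioi 0) = Ioi m := by
  apply Subset.antisymm
  · rintro _ ⟨t, ht, rfl⟩
    exact phiP_mem hm ht
  · rintro x hx
    rw [mem_Ioi] at hx
    have hxm : 1 < x/m := (one_lt_div hm).2 hx
    set t1 : ℝ := Real.log (x/m) with ht1def
    have ht1 : 0 < t1 := Real.log_pos hxm
    set t2 : ℝ := x/m with ht2def
    have ht12 : t1 ≤ t2 := by
      have := Real.log_le_sub_one_of_pos (by positivity : (0:ℝ) < x/m)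
      linarith
    have h1 : phiP m t1 < x := by
      have h := phiP_lt hm ht1
      rwa [ht1def, Real.exp_log (by positivity), mul_div_cancel₀ _ (ne_of_gt hm)] at h
    have h2 : x < phiP m t2 := by
      have h := phiP_gt hm (lt_of_lt_of_le ht1 ht12)
      rwa [ht2def, mul_div_cancel₀ _ (ne_of_gt hm)] at h
    have hsub : Icc t1 t2 ⊆ Ioi 0 := fun y hy => lt_of_lt_of_le ht1 hy.1
    have := intermediate_value_Icc (f := phiP m) ht12 (phiP_cont hsub)
    obtain ⟨t, ht, htx⟩ := this ⟨le_of_lt h1, le_of_lt h2⟩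
    exact ⟨t, hsub ht, htx⟩

noncomputable def fGam (α x : ℝ) : ℝ := x ^ (α - 1) * Real.exp (-x)

lemma fGam_integrableOn {α : ℝ} (hα : 0 < α) : IntegrableOn (fGam α) (Ioi 0) volume := by
  have := Real.GammaIntegral_convergent hα
  exact this.congr_fun (fun x _ => mul_comm _ _) measurableSet_Ioi

lemma transform_Ioo {α m : ℝ} (hm : 0 < m) :
    ∫ x in Ioo 0 m, fGam α x = ∫ t in Ioi 0, |phiM' m t| * fGam α (phiM m t) := by
  rw [← image_phiM hm,
    integral_image_eq_integral_abs_deriv_smul measurableSet_Ioi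
      (fun x hx => (hasDerivAt_phiM hx).hasDerivWithinAt) ((phiM_anti hm).injOn) (fGam α)]
  simp [smul_eq_mul]

lemma transform_Ioi {α m : ℝ} (hm : 0 < m) :
    ∫ x in Ioi m, fGam α x = ∫ t in Ioi 0, |phiP' m t| * fGam α (phiP m t) := by
  rw [← image_phiP hm,
    integral_image_eq_integral_abs_deriv_smul measurableSet_Ioi
      (fun x hx => (hasDerivAt_phiP hx).hasDerivWithinAt) ((phiP_mono hm).injOn) (fGam α)]
  simp [smul_eq_mul]

lemma transform_Ioo_int {α m : ℝ} (hα : 0 < α) (hm : 0 < m) :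
    IntegrableOn (fun t => |phiM' m t| * fGam α (phiM m t)) (Ioi 0) volume := by
  have h := (integrableOn_image_iff_integrableOn_abs_deriv_smul measurableSet_Ioi
      (fun x hx => (hasDerivAt_phiM hx).hasDerivWithinAt) ((phiM_anti hm).injOn) (fGam α)).1
  rw [image_phiM hm] at h
  have h2 := h ((fGam_integrableOn hα).mono_set (Ioo_subset_Ioi_self.trans (by
    intro x hx; exact hx)))
  simpa [smul_eq_mul] using h2

lemma transform_Ioi_int {α m : ℝ} (hα : 0 < α) (hm : 0 < m) :
    IntegrableOn (fun t => |phiP' m t| * fGam α (phiP m t)) (Ioi 0) volume := by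
  have h := (integrableOn_image_iff_integrableOn_abs_deriv_smul measurableSet_Ioi
      (fun x hx => (hasDerivAt_phiP hx).hasDerivWithinAt) ((phiP_mono hm).injOn) (fGam α)).1
  rw [image_phiP hm] at h
  have h2 := h ((fGam_integrableOn hα).mono_set (Ioi_subset_Ioi (le_of_lt hm)))
  simpa [smul_eq_mul] using h2

lemma int_strict_lt {A B : ℝ → ℝ} (IA : IntegrableOn A (Ioi 0) volume)
    (IB : IntegrableOn B (Ioi 0) volume) (h : ∀ t : ℝ, 0 < t → A t < B t) :
    (∫ t in Ioi (0:ℝ), A t) < ∫ t in Ioi (0:ℝ), B t := by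
  have hint : IntegrableOn (fun t => B t - A t) (Ioi 0) volume := IB.sub IA
  have hnn : 0 ≤ᵐ[volume.restrict (Ioi (0:ℝ))] fun t => B t - A t := by
    refine (ae_restrict_iff' measurableSet_Ioi).2 (ae_of_all _ fun t ht => ?_)
    have := h t ht
    simp only [Pi.zero_apply]
    linarith
  have hpos : 0 < ∫ t in Ioi (0:ℝ), (B t - A t) := by
    rw [setIntegral_pos_iff_support_of_nonneg_ae hnn hint]
    have hsub : Ioi (0:ℝ) ⊆ Function.support (fun t => B t - A t) ∩ Ioi 0 := by
      intro t ht
      exact ⟨by simp only [Function.mem_support]; have := h t ht; intro hc; linarith, ht⟩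
    calc (0:ENNReal) < ⊤ := by simp
    _ = volume (Ioi (0:ℝ)) := (Real.volume_Ioi).symm
    _ ≤ _ := measure_mono hsub
  have := integral_sub IB IA
  rw [this] at hpos
  linarith

lemma K_pos' : ∀ t : ℝ, 0 < t → 0 < t * Real.exp t - 2 * Real.exp t + t + 2 := K_pos
lemma H_ineq' {t : ℝ} (ht : 0 < t) :
    t * Real.exp t - Real.exp t + 1 < Real.exp (t/3) * (Real.exp t - 1 - t) := H_ineq ht

lemma pointwise_common {α m t : ℝ} (hm : 0 < m) (ht : 0 < t) :
    ∃ C : ℝ, 0 < C ∧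
      |phiM' m t| * fGam α (phiM m t) = C * (t * Real.exp t - (Real.exp t - 1)) ∧
      |phiP' m t| * fGam α (phiP m t)
        = C * ((Real.exp t - 1 - t) * (Real.exp t * (Real.exp (t*(α-1)) * Real.exp (-(m*t))))) := by
  have hD := expD_pos ht
  have hE := Real.exp_pos t
  have hu : 0 < phiM m t := (phiM_mem hm ht).1
  refine ⟨(phiM m t) ^ (α - 1) * Real.exp (-(phiM m t)) * m / (Real.exp t - 1)^2,
    by positivity, ?_, ?_⟩
  · rw [abs_of_neg (phiM'_neg hm ht)]
    unfold phiM' fGam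
    field_simp
    ring
  · rw [abs_of_pos (phiP'_pos hm ht)]
    have hphiP_eq : phiP m t = phiM m t * Real.exp t := by
      unfold phiM phiP
      field_simp
    have huE : phiM m t * (Real.exp t - 1) = m * t := by
      unfold phiM
      field_simp
    have hr1 : (phiM m t * Real.exp t) ^ (α - 1)
        = (phiM m t) ^ (α - 1) * Real.exp (t * (α-1)) := by
      rw [Real.mul_rpow (le_of_lt hu) (le_of_lt hE), ← Real.exp_mul]
    have hr2 : Real.exp (-(phiM m t * Real.exp t))
        = Real.exp (-(phiM m t)) * Real.exp (-(m*t)) := by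
      rw [← Real.exp_add]
      congr 1
      nlinarith [huE]
    unfold fGam
    rw [hphiP_eq, hr1, hr2]
    unfold phiP'
    field_simp

lemma pointwise_lower {α t : ℝ} (hα : (1:ℝ)/3 < α) (ht : 0 < t) :
    |phiM' (α - 1/3) t| * fGam α (phiM (α - 1/3) t)
      < |phiP' (α - 1/3) t| * fGam α (phiP (α - 1/3) t) := by
  have hm : 0 < α - 1/3 := by linarith
  obtain ⟨C, hC, hA, hB⟩ := pointwise_common (α := α) hm ht
  rw [hA, hB]
  apply mul_lt_mul_of_pos_left _ hC
  have e1 : Real.exp t * (Real.exp (t*(α-1)) * Real.exp (-((α - 1/3)*t))) = Real.exp (t/3) := by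
    rw [← Real.exp_add, ← Real.exp_add]
    congr 1
    ring
  rw [e1]
  have := H_ineq' ht
  nlinarith [this]

lemma pointwise_upper {α t : ℝ} (hα : 0 < α) (ht : 0 < t) :
    |phiP' α t| * fGam α (phiP α t) < |phiM' α t| * fGam α (phiM α t) := by
  obtain ⟨C, hC, hA, hB⟩ := pointwise_common (α := α) (m := α) hα ht
  rw [hA, hB]
  apply mul_lt_mul_of_pos_left _ hC
  have e1 : Real.exp t * (Real.exp (t*(α-1)) * Real.exp (-(α*t))) = 1 := by
    rw [← Real.exp_add, ← Real.exp_add]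
    have h0 : t + (t*(α-1) + -(α*t)) = 0 := by ring
    rw [h0, Real.exp_zero]
  rw [e1]
  have := K_pos' t ht
  nlinarith [this]

lemma lower_comparison {α : ℝ} (hα : (1:ℝ)/3 < α) :
    (∫ x in Ioo (0:ℝ) (α - 1/3), fGam α x) < ∫ x in Ioi (α - 1/3), fGam α x := by
  have hm : 0 < α - 1/3 := by linarith
  have hα0 : 0 < α := by linarith
  rw [transform_Ioo hm, transform_Ioi hm]
  exact int_strict_lt (transform_Ioo_int hα0 hm) (transform_Ioi_int hα0 hm)
    (fun t ht => pointwise_lower hα ht)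

lemma upper_comparison {α : ℝ} (hα : 0 < α) :
    (∫ x in Ioi α, fGam α x) < ∫ x in Ioo (0:ℝ) α, fGam α x := by
  rw [transform_Ioo hα, transform_Ioi hα]
  exact int_strict_lt (transform_Ioi_int hα hα) (transform_Ioo_int hα hα)
    (fun t ht => pointwise_upper hα ht)

lemma fGam_nonneg_on {α x : ℝ} (hx : 0 < x) : 0 ≤ fGam α x := by
  unfold fGam
  positivity

lemma hsplit {α : ℝ} (hα : 0 < α) {x : ℝ} (hx : 0 < x) :
    (∫ t in Ioc 0 x, fGam α t) + (∫ t in Ioi x, fGam α t) = Real.Gamma α := by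
  have hGamma : Real.Gamma α = ∫ t in Ioi 0, fGam α t := by
    rw [Real.Gamma_eq_integral hα]
    exact setIntegral_congr_fun measurableSet_Ioi (fun y _ => mul_comm _ _)
  rw [hGamma, ← Ioc_union_Ioi_eq_Ioi (le_of_lt hx),
    setIntegral_union (Ioc_disjoint_Ioi le_rfl) measurableSet_Ioi
      ((fGam_integrableOn hα).mono_set Ioc_subset_Ioi_self)
      ((fGam_integrableOn hα).mono_set (Ioi_subset_Ioi (le_of_lt hx)))]

lemma hmono {α : ℝ} (hα : 0 < α) {x y : ℝ} (hx : 0 < x) (hxy : x ≤ y) :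
    (∫ t in Ioc 0 x, fGam α t) ≤ ∫ t in Ioc 0 y, fGam α t := by
  apply setIntegral_mono_set ((fGam_integrableOn hα).mono_set Ioc_subset_Ioi_self)
  · refine (ae_restrict_iff' measurableSet_Ioc).2 (ae_of_all _ fun t ht => ?_)
    exact fGam_nonneg_on ht.1
  · exact Filter.Eventually.of_forall (Ioc_subset_Ioc_right hxy)

/-- Chen–Rubin bounds: the median `ν(α)` of the Gamma(α,1) distribution
satisfies `α - 1/3 < ν(α) < α`. -/
theorem stmt_12 (α ν : ℝ) (hα : 0 < α) (hν_pos : 0 < ν)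
    (hν : ∫ t in Ioc 0 ν, t ^ (α - 1) * Real.exp (-t) = Real.Gamma α / 2) :
    α - 1 / 3 < ν ∧ ν < α := by
  have hν' : (∫ t in Ioc 0 ν, fGam α t) = Real.Gamma α / 2 := hν
  have hνIoi : (∫ t in Ioi ν, fGam α t) = Real.Gamma α / 2 := by
    have := hsplit hα hν_pos
    rw [hν'] at this
    linarith
  constructor
  · -- lower bound
    rcases le_or_gt α (1/3) with h13 | h13
    · linarith
    · by_contra hcon
      push_neg at hcon
      have hm : 0 < α - 1/3 := by linarith
      have hlt := lower_comparison h13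
      have hIoo : (∫ t in Ioo (0:ℝ) (α - 1/3), fGam α t) = ∫ t in Ioc 0 (α - 1/3), fGam α t :=
        setIntegral_congr_set Ioo_ae_eq_Ioc
      have hsum := hsplit hα hm
      -- ∫_{Ioc 0 m} < Γ/2
      have h1 : (∫ t in Ioc 0 (α - 1/3), fGam α t) < Real.Gamma α / 2 := by
        rw [hIoo] at hlt
        linarith
      have h2 : Real.Gamma α / 2 ≤ ∫ t in Ioc 0 (α - 1/3), fGam α t := by
        rw [← hν']
        exact hmono hα hν_pos hcon
      linarith
  · -- upper bound
    by_contra hcon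
    push_neg at hcon
    have hlt := upper_comparison hα
    have hIoo : (∫ t in Ioo (0:ℝ) α, fGam α t) = ∫ t in Ioc 0 α, fGam α t :=
      setIntegral_congr_set Ioo_ae_eq_Ioc
    have hsum := hsplit hα hα
    have h1 : Real.Gamma α / 2 < ∫ t in Ioc 0 α, fGam α t := by
      rw [hIoo] at hlt
      linarith
    have h2 : (∫ t in Ioc 0 α, fGam α t) ≤ Real.Gamma α / 2 := by
      rw [← hν']
      exact hmono hα hα hcon
    linarith
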